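/- Let R be a commutative Noetherian ring, I an ideal with a finite free resolution 0 → F₂ → F₁ → F₀ → I → 0, and F ∈ R an element such that (I : F) = (A, B) for a regular sequence A, B on R. Then from the short exact sequence 0 → R/(I:F) →(×F) R/I → R/(I,F) → 0 and the Koszul resolution of R/(A,B), the mapping cone yields a free resolution of (I,F) of the form 0 → F₂ ⊕ R → F₁ ⊕ R² → F₀ ⊕ R → (I,F) → 0. -/

import Mathlib

/-- (mapping cone) Let `R` be commutative Noetherian, `I` an ideal
with a finite free resolution `0 → F₂ → F₁ → F₀ → I → 0`, and `F ∈ R` with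
`(I : F) = (A,B)` for a regular sequence `A, B`.  Then `(I,F)` has a free
resolution `0 → F₂ ⊕ R → F₁ ⊕ R² → F₀ ⊕ R → (I,F) → 0`. -/
theorem mapping_cone_resolution {R : Type*} [CommRing R] [IsNoetherianRing R]
    (I : Ideal R) (F A B : R)
    (F2 F1 F0 : Type*)
    [AddCommGroup F2] [Module R F2] [Module.Free R F2] [Module.Finite R F2]
    [AddCommGroup F1] [Module R F1] [Module.Free R F1] [Module.Finite R F1]
    [AddCommGroup F0] [Module R F0] [Module.Free R F0] [Module.Finite R F0]
    (f2 : F2 →ₗ[R] F1) (f1 : F1 →ₗ[R] F0) (f0 : F0 →ₗ[R] R)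
    (hinj : Function.Injective f2)
    (hex21 : Function.Exact f2 f1)
    (hex10 : Function.Exact f1 f0)
    (hrange : LinearMap.range f0 = I)
    (hcolon : ∀ x : R, x * F ∈ I ↔ x ∈ Ideal.span {A, B})
    (hA : ∀ x : R, A * x = 0 → x = 0)
    (hB : ∀ x : R, B * x ∈ Ideal.span {A} → x ∈ Ideal.span {A}) :
    ∃ (g2 : (F2 × R) →ₗ[R] (F1 × (R × R))) (g1 : (F1 × (R × R)) →ₗ[R] (F0 × R))
      (g0 : (F0 × R) →ₗ[R] R),
      Function.Injective g2 ∧ Function.Exact g2 g1 ∧ Function.Exact g1 g0 ∧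
      LinearMap.range g0 = I ⊔ Ideal.span {F} := by
  -- choose lifts α, β ∈ F0 with f0 α = A*F, f0 β = B*F
  have hAF : A * F ∈ LinearMap.range f0 := by
    rw [hrange]; exact (hcolon A).mpr (Ideal.subset_span (by simp))
  have hBF : B * F ∈ LinearMap.range f0 := by
    rw [hrange]; exact (hcolon B).mpr (Ideal.subset_span (by simp))
  obtain ⟨α, hα⟩ := hAF
  obtain ⟨β, hβ⟩ := hBF
  have hker10 : LinearMap.ker f0 = LinearMap.range f1 := (LinearMap.exact_iff).mp hex10
  have hker21 : LinearMap.ker f1 = LinearMap.range f2 := (LinearMap.exact_iff).mp hex21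
  -- choose γ ∈ F1 with f1 γ = A•β - B•α
  have hmem : A • β - B • α ∈ LinearMap.range f1 := by
    rw [← hker10, LinearMap.mem_ker, map_sub, map_smul, map_smul, hα, hβ, smul_eq_mul,
      smul_eq_mul]
    ring
  obtain ⟨γ, hγ⟩ := hmem
  -- the mapping cone maps
  refine ⟨(f2.coprod (LinearMap.toSpanSingleton R F1 γ)).prod
      (((LinearMap.toSpanSingleton R R (-B)).prod (LinearMap.toSpanSingleton R R A)).comp
        (LinearMap.snd R F2 R)),
    (f1.coprod (-(LinearMap.toSpanSingleton R F0 α).coprod (LinearMap.toSpanSingleton R F0 β))).prod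
      (((LinearMap.toSpanSingleton R R A).coprod (LinearMap.toSpanSingleton R R B)).comp
        (LinearMap.snd R F1 (R × R))),
    f0.coprod (LinearMap.toSpanSingleton R R F), ?_, ?_, ?_, ?_⟩
  · -- injectivity of g2
    rw [← LinearMap.ker_eq_bot, eq_bot_iff]
    rintro ⟨w, x⟩ h
    simp only [LinearMap.mem_ker, LinearMap.prod_apply, Function.prod, LinearMap.coprod_apply,
      LinearMap.comp_apply, LinearMap.snd_apply, LinearMap.toSpanSingleton_apply,
      Prod.mk_eq_zero, Prod.mk.injEq, smul_eq_mul] at h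
    obtain ⟨h1, _, h3⟩ := h
    have hx : x = 0 := hA x (by rw [mul_comm]; exact h3)
    subst hx
    have hw : w = 0 := by
      apply hinj
      simpa using h1
    simp [hw]
  · -- exactness at F1 × (R × R)
    rw [LinearMap.exact_iff]
    ext ⟨v, a, b⟩
    simp only [LinearMap.mem_ker, LinearMap.mem_range, LinearMap.prod_apply, Function.prod,
      LinearMap.coprod_apply, LinearMap.comp_apply, LinearMap.snd_apply,
      LinearMap.toSpanSingleton_apply, LinearMap.neg_apply, Prod.mk_eq_zero, Prod.mk.injEq,
      smul_eq_mul, Prod.exists]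
    constructor
    · rintro ⟨h1, h2⟩
      -- h1 : f1 v + -(a•α + b•β) = 0, h2 : a*A + b*B = 0
      -- b ∈ (A) by regularity of the sequence
      have hbA : b ∈ Ideal.span {A} := by
        apply hB
        rw [Ideal.mem_span_singleton]
        exact ⟨-a, by linear_combination h2⟩
      rw [Ideal.mem_span_singleton] at hbA
      obtain ⟨x, hb⟩ := hbA
      have ha : a = x * -B := by
        have h4 : A * (a + x * B) = 0 := by rw [hb] at h2; linear_combination h2
        have := hA _ h4
        linear_combination this
      have hmem1 : v - x • γ ∈ LinearMap.range f2 := by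
        rw [← hker21, LinearMap.mem_ker, map_sub, map_smul, hγ]
        have h1' : f1 v = a • α + b • β := by
          rw [add_neg_eq_zero] at h1
          exact h1
        rw [h1', ha, hb]
        simp only [smul_eq_mul, smul_sub, smul_smul]
        module
      obtain ⟨w, hw⟩ := hmem1
      exact ⟨w, x, by rw [hw]; abel, by rw [ha], by rw [hb]; ring⟩
    · rintro ⟨w, x, hv, haa, hbb⟩
      subst hv haa hbb
      constructor
      · rw [map_add, map_smul, hγ, hex21.apply_apply_eq_zero]
        simp only [smul_eq_mul, smul_sub, smul_smul]
        module
      · ring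
  · -- exactness at F0 × R
    rw [LinearMap.exact_iff]
    ext ⟨u, c⟩
    simp only [LinearMap.mem_ker, LinearMap.mem_range, LinearMap.prod_apply, Function.prod,
      LinearMap.coprod_apply, LinearMap.comp_apply, LinearMap.snd_apply,
      LinearMap.toSpanSingleton_apply, LinearMap.neg_apply, Prod.mk.injEq,
      smul_eq_mul, Prod.exists]
    constructor
    · intro h
      -- h : f0 u + c • F = 0
      have hcF : c * F ∈ I := by
        rw [← hrange]
        refine ⟨-u, ?_⟩
        rw [map_neg]
        linear_combination -h
      obtain ⟨s, t, hst⟩ := Ideal.mem_span_pair.mp ((hcolon c).mp hcF)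
      have hmem2 : u + (s • α + t • β) ∈ LinearMap.range f1 := by
        rw [← hker10, LinearMap.mem_ker, map_add, map_add, map_smul, map_smul, hα, hβ,
          smul_eq_mul, smul_eq_mul]
        have hfu : f0 u = -(c * F) := by linear_combination h
        rw [hfu]
        linear_combination F * hst
      obtain ⟨v, hv⟩ := hmem2
      refine ⟨v, s, t, ?_, hst⟩
      rw [hv]
      abel
    · rintro ⟨v, s, t, hu, hc⟩
      subst hu hc
      rw [map_add, map_neg, map_add, map_smul, map_smul, hα, hβ, hex10.apply_apply_eq_zero]
      simp only [smul_eq_mul]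
      ring
  · -- range of g0
    apply le_antisymm
    · rintro x ⟨⟨u, c⟩, rfl⟩
      simp only [LinearMap.coprod_apply, LinearMap.toSpanSingleton_apply, smul_eq_mul]
      exact Submodule.add_mem _
        (Ideal.mem_sup_left (hrange ▸ ⟨u, rfl⟩))
        (Ideal.mem_sup_right (Ideal.mem_span_singleton.mpr ⟨c, mul_comm c F⟩))
    · apply sup_le
      · rintro x hx
        rw [← hrange] at hx
        obtain ⟨u, rfl⟩ := hx
        exact ⟨(u, 0), by simp⟩
      · rw [Ideal.span_le]
        rintro x rfl
        exact ⟨(0, 1), by simp⟩
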